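/- There exist absolute constants C3, C4 > 0 such that for every integer p that is either 1 or a positive even number there is a constant D(p) (depending only on p) with the property that for every integer d ≥ D(p): C3 · p^(−1/2) ≤ Σ_{k=0}^∞ N(d,k) · min{λ_d(k), ν_d(p)} ≤ C4 · p^(−1/2). -/

import Mathlib

open Real Filter

/-- Distinct eigenvalues (up to constants) of the NTK on the sphere `S^d`:
`ν_d(k) = d^d · k^(k−2) · (k+d)^(−(k+d+1)) · (k² + k·d + d)`. -/
noncomputable def nuNT (d k : ℕ) : ℝ :=
  (d : ℝ) ^ (d : ℝ) * (k : ℝ) ^ ((k : ℝ) - 2) *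
    ((k : ℝ) + (d : ℝ)) ^ (-((k : ℝ) + (d : ℝ) + 1)) *
    ((k : ℝ) ^ 2 + (k : ℝ) * (d : ℝ) + (d : ℝ))

/-- Dimension of the space of spherical harmonics of degree `k` on `S^d ⊆ ℝ^(d+1)`. -/
def Nsph (d k : ℕ) : ℕ :=
  if k = 0 then 1
  else (k + d).choose k - (if 2 ≤ k then (k + d - 2).choose (k - 2) else 0)

/-- `λ_d(0) = 1` and `λ_d(k) = ν_d(k)` for `k ≥ 1`. -/
noncomputable def lamNT (d k : ℕ) : ℝ := if k = 0 then 1 else nuNT d k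

open Topology


lemma stirling_le (n : ℕ) (hn : 1 ≤ n) :
    ((Nat.factorial n : ℕ) : ℝ) ≤ 3 * Real.sqrt n * ((n : ℝ) / Real.exp 1) ^ n := by
  obtain ⟨m, rfl⟩ := Nat.exists_eq_add_of_le hn
  have h1 : Stirling.stirlingSeq (1 + m) ≤ Stirling.stirlingSeq 1 := by
    have := Stirling.stirlingSeq'_antitone (Nat.zero_le m)
    simpa [Function.comp, Nat.succ_eq_add_one, Nat.add_comm] using this
  rw [Stirling.stirlingSeq_one] at h1
  have hpos : (0:ℝ) < Real.sqrt (2 * (1+m) : ℝ) * ((1+m : ℕ) / Real.exp 1) ^ (1+m) := by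
    positivity
  have h2 : ((Nat.factorial (1+m) : ℕ) : ℝ) ≤ (Real.exp 1 / Real.sqrt 2) *
      (Real.sqrt (2 * (1+m) : ℝ) * (((1+m:ℕ) : ℝ) / Real.exp 1) ^ (1+m)) := by
    have h1' : ((Nat.factorial (1+m) : ℕ) : ℝ) / (Real.sqrt (2 * (1+m) : ℝ) * (((1+m:ℕ) : ℝ) / Real.exp 1) ^ (1+m)) ≤ Real.exp 1 / Real.sqrt 2 := by
      simpa [Stirling.stirlingSeq] using h1
    exact (div_le_iff₀ hpos).mp h1'
  refine h2.trans ?_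
  have he : Real.exp 1 ≤ 3 := by
    have := Real.exp_one_lt_d9; linarith
  have hs : Real.sqrt (2 * (1+m) : ℝ) = Real.sqrt 2 * Real.sqrt ((1+m:ℕ)) := by
    rw [← Real.sqrt_mul (by norm_num)]; norm_num
  rw [hs]
  have h2pos : (0:ℝ) < Real.sqrt 2 := by positivity
  have : Real.exp 1 / Real.sqrt 2 * (Real.sqrt 2 * Real.sqrt ((1+m:ℕ)) * (((1+m:ℕ):ℝ) / Real.exp 1) ^ (1+m))
      = Real.exp 1 * Real.sqrt ((1+m:ℕ)) * (((1+m:ℕ):ℝ) / Real.exp 1) ^ (1+m) := by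
    field_simp
  rw [this]
  have hb : (0:ℝ) ≤ Real.sqrt ((1+m:ℕ)) * (((1+m:ℕ):ℝ) / Real.exp 1) ^ (1+m) := by positivity
  nlinarith [hb, he, Real.exp_pos 1]

lemma stirling_ge (n : ℕ) (hn : 1 ≤ n) :
    2 * Real.sqrt n * ((n : ℝ) / Real.exp 1) ^ n ≤ ((Nat.factorial n : ℕ) : ℝ) := by
  obtain ⟨m, rfl⟩ := Nat.exists_eq_add_of_le hn
  have h1 : Real.sqrt π ≤ Stirling.stirlingSeq (1 + m) := by
    have ht : Tendsto (Stirling.stirlingSeq ∘ Nat.succ) atTop (𝓝 (Real.sqrt π)) :=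
      Stirling.tendsto_stirlingSeq_sqrt_pi.comp (tendsto_add_atTop_nat 1) |>.congr
        (fun n => by simp [Function.comp, Nat.succ_eq_add_one, Nat.add_comm])
    have := Stirling.stirlingSeq'_antitone.le_of_tendsto ht m
    simpa [Function.comp, Nat.succ_eq_add_one, Nat.add_comm] using this
  have hpos : (0:ℝ) < Real.sqrt (2 * (1+m) : ℝ) * (((1+m:ℕ):ℝ) / Real.exp 1) ^ (1+m) := by
    positivity
  have h2 : Real.sqrt π * (Real.sqrt (2 * (1+m) : ℝ) * (((1+m:ℕ):ℝ) / Real.exp 1) ^ (1+m))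
      ≤ ((Nat.factorial (1+m) : ℕ) : ℝ) := by
    have h1' : Real.sqrt π ≤ ((Nat.factorial (1+m) : ℕ) : ℝ) / (Real.sqrt (2 * (1+m) : ℝ) * (((1+m:ℕ):ℝ) / Real.exp 1) ^ (1+m)) := by
      simpa [Stirling.stirlingSeq] using h1
    exact (le_div_iff₀ hpos).mp h1'
  refine le_trans ?_ h2
  have hs : Real.sqrt (2 * (1+m) : ℝ) = Real.sqrt 2 * Real.sqrt ((1+m:ℕ)) := by
    rw [← Real.sqrt_mul (by norm_num)]; norm_num
  rw [hs]
  have hpi : (2:ℝ) ≤ Real.sqrt π * Real.sqrt 2 := by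
    rw [← Real.sqrt_mul Real.pi_nonneg]
    have : (4:ℝ) ≤ π * 2 := by nlinarith [Real.pi_gt_three]
    nlinarith [Real.sqrt_le_sqrt this, Real.sqrt_nonneg (π*2), Real.sq_sqrt (by positivity : (0:ℝ) ≤ π*2), Real.sqrt_nonneg (4:ℝ)]
  have hb : (0:ℝ) ≤ Real.sqrt ((1+m:ℕ)) * (((1+m:ℕ):ℝ) / Real.exp 1) ^ (1+m) := by positivity
  nlinarith [hb, hpi]


lemma pow_le_exp_mul (m n : ℕ) (hm : 1 ≤ m) (hnm : n ≤ m) :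
    ((m:ℝ)+1)^n ≤ Real.exp 1 * (m:ℝ)^n := by
  have hM : (0:ℝ) < m := by exact_mod_cast hm
  have h1 : ((m:ℝ)+1)^n = (m:ℝ)^n * (1 + 1/(m:ℝ))^n := by
    rw [← mul_pow]; congr 1; field_simp
  rw [h1]
  have h2 : (1 + 1/(m:ℝ))^n ≤ Real.exp ((n:ℝ)/(m:ℝ)) := by
    calc (1 + 1/(m:ℝ))^n ≤ (Real.exp (1/(m:ℝ)))^n := by
          apply pow_le_pow_left₀ (by positivity)
          linarith [Real.add_one_le_exp (1/(m:ℝ))]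
      _ = Real.exp ((n:ℝ)/(m:ℝ)) := by
          rw [← Real.exp_nat_mul]; congr 1; field_simp
  have h3 : Real.exp ((n:ℝ)/(m:ℝ)) ≤ Real.exp 1 := by
    apply Real.exp_le_exp.mpr
    rw [div_le_one hM]; exact_mod_cast hnm
  calc (m:ℝ)^n * (1 + 1/(m:ℝ))^n ≤ (m:ℝ)^n * Real.exp 1 := by
        apply mul_le_mul_of_nonneg_left (h2.trans h3) (by positivity)
    _ = Real.exp 1 * (m:ℝ)^n := by ring

lemma exp_mul_pow_le (n : ℕ) (hn : 1 ≤ n) :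
    Real.exp 1 * (n:ℝ)^(n+1) ≤ ((n:ℝ)+1)^(n+1) := by
  have hN : (0:ℝ) < n := by exact_mod_cast hn
  have h1 : Real.exp (1/((n:ℝ)+1)) ≤ ((n:ℝ)+1)/(n:ℝ) := by
    have h0 : (n:ℝ)/((n:ℝ)+1) ≤ Real.exp (-(1/((n:ℝ)+1))) := by
      have := Real.add_one_le_exp (-(1/((n:ℝ)+1)))
      have : -(1/((n:ℝ)+1)) + 1 = (n:ℝ)/((n:ℝ)+1) := by field_simp; ring
      linarith [Real.add_one_le_exp (-(1/((n:ℝ)+1)))]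
    have hpos : (0:ℝ) < (n:ℝ)/((n:ℝ)+1) := by positivity
    rw [Real.exp_neg] at h0
    have := (le_inv_comm₀ hpos (Real.exp_pos _)).mp h0
    calc Real.exp (1/((n:ℝ)+1)) ≤ ((n:ℝ)/((n:ℝ)+1))⁻¹ := this
      _ = ((n:ℝ)+1)/(n:ℝ) := by rw [inv_div]
  have h2 : Real.exp 1 ≤ (((n:ℝ)+1)/(n:ℝ))^(n+1) := by
    calc Real.exp 1 = (Real.exp (1/((n:ℝ)+1)))^(n+1) := by
          rw [← Real.exp_nat_mul]; congr 1; field_simp; norm_num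
      _ ≤ (((n:ℝ)+1)/(n:ℝ))^(n+1) := by
          apply pow_le_pow_left₀ (Real.exp_pos _).le h1
  calc Real.exp 1 * (n:ℝ)^(n+1) ≤ (((n:ℝ)+1)/(n:ℝ))^(n+1) * (n:ℝ)^(n+1) := by
        apply mul_le_mul_of_nonneg_right h2 (by positivity)
    _ = ((n:ℝ)+1)^(n+1) := by rw [div_pow]; field_simp



lemma nuNT_nonneg (d k : ℕ) : 0 ≤ nuNT d k := by
  unfold nuNT; positivity

lemma nuNT_eq (d k : ℕ) (hd : 1 ≤ d) (hk : 1 ≤ k) :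
    nuNT d k = ((d:ℝ)^(d:ℕ) * (k:ℝ)^(k:ℕ) * ((k:ℝ)^2 + (k:ℝ)*(d:ℝ) + (d:ℝ))) /
      ((k:ℝ)^2 * ((k:ℝ)+(d:ℝ))^(k+d+1)) := by
  have hK : (0:ℝ) < k := by exact_mod_cast hk
  have hKD : (0:ℝ) < (k:ℝ) + d := by positivity
  unfold nuNT
  rw [show ((d:ℝ)^(d:ℝ)) = (d:ℝ)^(d:ℕ) from Real.rpow_natCast _ d]
  rw [Real.rpow_sub hK, Real.rpow_natCast, Real.rpow_neg hKD.le]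
  rw [show ((k:ℝ)+(d:ℝ)+1) = ((k+d+1 : ℕ) : ℝ) by push_cast; ring]
  rw [Real.rpow_natCast]
  rw [show ((2:ℝ)) = ((2:ℕ):ℝ) by norm_num, Real.rpow_natCast]
  field_simp

lemma nuNT_pos (d k : ℕ) (hd : 1 ≤ d) (hk : 1 ≤ k) : 0 < nuNT d k := by
  rw [nuNT_eq d k hd hk]
  have hK : (0:ℝ) < k := by exact_mod_cast hk
  have hD : (0:ℝ) < d := by exact_mod_cast hd
  positivity


lemma nuNT_succ_le (d k : ℕ) (hd : 1 ≤ d) (hk : 1 ≤ k) :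
    nuNT d (k+1) ≤ nuNT d k := by
  obtain ⟨j, rfl⟩ : ∃ j, k = j + 1 := ⟨k - 1, by omega⟩
  have hD : (1:ℝ) ≤ (d:ℝ) := by exact_mod_cast hd
  have hD0 : (0:ℝ) < d := by linarith
  set X : ℝ := (j:ℝ) + 1 with hX
  have hX0 : (0:ℝ) < X := by positivity
  set Y : ℝ := X + (d:ℝ) with hY
  have hY0 : (0:ℝ) < Y := by positivity
  set E : ℝ := Real.exp 1 with hE
  set Q : ℝ := X^2 + X*(d:ℝ) + (d:ℝ) with hQ
  set Q' : ℝ := (X+1)^2 + (X+1)*(d:ℝ) + (d:ℝ) with hQ'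
  have hQ0 : (0:ℝ) ≤ Q := by positivity
  have hQ'0 : (0:ℝ) ≤ Q' := by positivity
  have ha : (X+1)^j ≤ E * X^j := by
    have h := pow_le_exp_mul (j+1) j (by omega) (by omega)
    push_cast at h
    exact h
  have hb : E * Y^(j+d+2) ≤ (Y+1)^(j+d+2) := by
    have h := exp_mul_pow_le (j+1+d) (by omega)
    have hcast : ((j+1+d : ℕ) : ℝ) = Y := by rw [hY, hX]; push_cast; ring
    have he : j+1+d+1 = j+d+2 := by omega
    rw [hcast, he] at h
    exact h
  have hc : X * Q' ≤ Q * (Y+1) := by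
    rw [hQ, hQ', hY, hX]
    have hj0 : (0:ℝ) ≤ (j:ℝ) := Nat.cast_nonneg j
    have t1 : (0:ℝ) ≤ ((j:ℝ)+1)^2*((d:ℝ)-1) := mul_nonneg (by positivity) (by linarith)
    have t2 : (0:ℝ) ≤ ((j:ℝ)+1)*((d:ℝ)^2-1) := by
      apply mul_nonneg (by positivity); nlinarith
    nlinarith [t1, t2, hD0]
  have key : (X+1)^(j+2) * Q' * (X^2 * Y^(j+d+2)) ≤
      X^(j+1) * Q * ((X+1)^2 * (Y+1)^(j+d+3)) := by
    calc (X+1)^(j+2) * Q' * (X^2 * Y^(j+d+2))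
        = ((X+1)^j) * ((X+1)^2 * Q' * X^2 * Y^(j+d+2)) := by ring
      _ ≤ (E * X^j) * ((X+1)^2 * Q' * X^2 * Y^(j+d+2)) := by
          apply mul_le_mul_of_nonneg_right ha (by positivity)
      _ = (E * (X+1)^2 * Y^(j+d+2)) * (X^(j+1) * (X * Q')) := by ring
      _ ≤ (E * (X+1)^2 * Y^(j+d+2)) * (X^(j+1) * (Q * (Y+1))) := by
          exact mul_le_mul_of_nonneg_left (mul_le_mul_of_nonneg_left hc (by positivity)) (by positivity)
      _ = (X^(j+1) * Q * (X+1)^2) * ((E * Y^(j+d+2)) * (Y+1)) := by ring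
      _ ≤ (X^(j+1) * Q * (X+1)^2) * ((Y+1)^(j+d+2) * (Y+1)) := by
          exact mul_le_mul_of_nonneg_left (mul_le_mul_of_nonneg_right hb (by positivity)) (by positivity)
      _ = X^(j+1) * Q * ((X+1)^2 * (Y+1)^(j+d+3)) := by ring
  rw [nuNT_eq d (j+1+1) hd (by omega), nuNT_eq d (j+1) hd (by omega)]
  rw [div_le_div_iff₀ (by push_cast; positivity) (by push_cast; positivity)]
  push_cast
  have := mul_le_mul_of_nonneg_left key (show (0:ℝ) ≤ (d:ℝ)^d by positivity)
  calc (d:ℝ)^d * ((j:ℝ)+1+1)^(j+1+1) * (((j:ℝ)+1+1)^2 + ((j:ℝ)+1+1)*(d:ℝ) + (d:ℝ)) *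
        (((j:ℝ)+1)^2 * (((j:ℝ)+1)+(d:ℝ))^(j+1+d+1))
      = (d:ℝ)^d * ((X+1)^(j+2) * Q' * (X^2 * Y^(j+d+2))) := by rw [hQ', hY, hX]; ring
    _ ≤ (d:ℝ)^d * (X^(j+1) * Q * ((X+1)^2 * (Y+1)^(j+d+3))) := this
    _ = (d:ℝ)^d * ((j:ℝ)+1)^(j+1) * (((j:ℝ)+1)^2 + ((j:ℝ)+1)*(d:ℝ) + (d:ℝ)) *
        ((((j:ℝ)+1)+1)^2 * ((((j:ℝ)+1)+1)+(d:ℝ))^(j+1+1+d+1)) := by rw [hQ, hY, hX]; ring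



lemma Nsph_eq' (e m : ℕ) : Nsph (e+1) (m+1) = (m+e+1).choose (m+1) + (m+e).choose m := by
  match m with
  | 0 =>
    simp only [Nsph, if_neg (by omega : ¬ (0+1 = 0)), if_neg (by omega : ¬ 2 ≤ 0+1)]
    simp [Nat.choose_one_right]
    omega
  | (n+1) =>
    simp only [Nsph, if_neg (by omega : ¬ (n+1+1 = 0)), if_pos (by omega : 2 ≤ n+1+1)]
    rw [show n+1+1+(e+1)-2 = n+e+1 by omega, show n+1+1-2 = n by omega,
        show n+1+1+(e+1) = (n+e+2)+1 by omega]
    rw [Nat.choose_succ_succ' (n+e+2) (n+1)]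
    rw [show n+e+2 = (n+e+1)+1 by omega]
    rw [Nat.choose_succ_succ' (n+e+1) n]
    rw [show n+1+e+1 = n+e+1+1 by omega]
    rw [show n+1+e = n+e+1 by omega]
    omega

lemma Nsph_le' (e m : ℕ) : Nsph (e+1) (m+1) ≤ 2 * (m+e+1).choose (m+1) := by
  rw [Nsph_eq', show m+e+1 = (m+e)+1 by omega, Nat.choose_succ_succ' (m+e) m]
  omega

lemma choose_le_Nsph' (e m : ℕ) : (m+e+1).choose (m+1) ≤ Nsph (e+1) (m+1) := by
  rw [Nsph_eq']; omega

lemma hockey (c p : ℕ) : ∑ k ∈ Finset.range (p+1), (k+c).choose k = (p+c+1).choose p := by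
  induction p with
  | zero => simp
  | succ p ih =>
    rw [Finset.sum_range_succ, ih]
    rw [show p+1+c+1 = (p+c+1)+1 by omega]
    rw [Nat.choose_succ_succ' (p+c+1) p]
    congr 2
    omega

lemma sum_Nsph_le' (e p : ℕ) :
    ∑ k ∈ Finset.range (p+1), Nsph (e+1) k ≤ 2 * (p+e+1).choose p := by
  calc ∑ k ∈ Finset.range (p+1), Nsph (e+1) k
      ≤ ∑ k ∈ Finset.range (p+1), 2 * (k+e).choose k := by
        apply Finset.sum_le_sum
        intro k _
        match k with
        | 0 => simp [Nsph]
        | (m+1) => rw [show m+1+e = m+e+1 by omega]; exact Nsph_le' e m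
    _ = 2 * (p+e+1).choose p := by rw [← Finset.mul_sum, hockey e p]

lemma choose_pd' (e p : ℕ) (hp : 1 ≤ p) (hpe : p ≤ e) :
    (p+e+1).choose p ≤ 2 * (p+e).choose p := by
  obtain ⟨q, rfl⟩ : ∃ q, p = q+1 := ⟨p-1, by omega⟩
  rw [show q+1+e+1 = (q+e+1)+1 by omega, Nat.choose_succ_succ' (q+e+1) q]
  have h2 : (q+e+1).choose q ≤ (q+e+1).choose (q+1) := by
    apply Nat.choose_le_succ_of_lt_half_left
    omega
  rw [show q+1+e = q+e+1 by omega]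
  omega





section Key
variable (k m : ℕ)

lemma cast_choose_fact (hC : True) :
    ((k+m).choose k : ℝ) * (Nat.factorial k : ℕ) * ((Nat.factorial m : ℕ) : ℝ) =
      ((Nat.factorial (k+m) : ℕ) : ℝ) := by
  have h := Nat.choose_mul_factorial_mul_factorial (Nat.le_add_right k m)
  rw [Nat.add_sub_cancel_left] at h
  exact_mod_cast h

end Key

set_option maxHeartbeats 2000000 in
lemma key_upper (k m : ℕ) (hk : 1 ≤ k) (hm : 1 ≤ m) :
    ((k+m).choose k : ℝ) * nuNT (m+1) k ≤ 7 / ((k:ℝ) * Real.sqrt k) := by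
  set E : ℝ := Real.exp 1 with hE
  have hE0 : (0:ℝ) < E := Real.exp_pos 1
  have hE3 : E ≤ 3 := by rw [hE]; have := Real.exp_one_lt_d9; linarith
  have hK1 : (1:ℝ) ≤ (k:ℝ) := by exact_mod_cast hk
  have hM1 : (1:ℝ) ≤ (m:ℝ) := by exact_mod_cast hm
  have hK0 : (0:ℝ) < k := by linarith
  have hM0 : (0:ℝ) < m := by linarith
  set K : ℝ := (k:ℝ)
  set M : ℝ := (m:ℝ)
  set sk : ℝ := Real.sqrt K with hsk
  set sm : ℝ := Real.sqrt M with hsm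
  set ss : ℝ := Real.sqrt (K+M) with hss
  set sz : ℝ := Real.sqrt (K+M+1) with hsz
  set sd : ℝ := Real.sqrt (M+1) with hsd
  have hsk0 : 0 < sk := Real.sqrt_pos.mpr hK0
  have hsm0 : 0 < sm := Real.sqrt_pos.mpr hM0
  have hss0 : 0 < ss := Real.sqrt_pos.mpr (by linarith)
  have hsz0 : 0 < sz := Real.sqrt_pos.mpr (by linarith)
  have hsd0 : 0 < sd := Real.sqrt_pos.mpr (by linarith)
  set C : ℝ := ((k+m).choose k : ℝ) with hC
  have hC0 : (0:ℝ) ≤ C := by positivity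
  -- step 1 : Stirling bound on the binomial coefficient
  have step1 : C * (4*sk*sm*(K^k*M^m)) ≤ 3*ss*(K+M)^(k+m) := by
    have u1 : C * (2*sk*(K/E)^k) * (2*sm*(M/E)^m) ≤ ((Nat.factorial (k+m) : ℕ) : ℝ) := by
      calc C * (2*sk*(K/E)^k) * (2*sm*(M/E)^m)
          ≤ C * ((Nat.factorial k : ℕ) : ℝ) * (2*sm*(M/E)^m) := by
            apply mul_le_mul_of_nonneg_right _ (by positivity)
            exact mul_le_mul_of_nonneg_left (stirling_ge k hk) hC0
        _ ≤ C * ((Nat.factorial k : ℕ) : ℝ) * ((Nat.factorial m : ℕ) : ℝ) := by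
            apply mul_le_mul_of_nonneg_left (stirling_ge m hm) (by positivity)
        _ = ((Nat.factorial (k+m) : ℕ) : ℝ) := cast_choose_fact k m trivial
    have u2 : ((Nat.factorial (k+m) : ℕ) : ℝ) ≤ 3*ss*((K+M)/E)^(k+m) := by
      have := stirling_le (k+m) (by omega)
      push_cast at this
      convert this using 3
    have u3 := (u1.trans u2)
    have u4 := mul_le_mul_of_nonneg_right u3 (show (0:ℝ) ≤ E^(k+m) by positivity)
    calc C * (4*sk*sm*(K^k*M^m))
        = C * (2*sk*(K/E)^k) * (2*sm*(M/E)^m) * E^(k+m) := by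
          rw [div_pow, div_pow, pow_add]
          field_simp
          ring
      _ ≤ 3*ss*((K+M)/E)^(k+m) * E^(k+m) := u4
      _ = 3*ss*(K+M)^(k+m) := by
          rw [div_pow]
          field_simp
  -- auxiliary comparisons
  have hssz : ss ≤ sz := Real.sqrt_le_sqrt (by linarith)
  have hsdsz : sd ≤ sz := Real.sqrt_le_sqrt (by linarith)
  have hsd2 : sd ≤ Real.sqrt 2 * sm := by
    rw [hsd, hsm, ← Real.sqrt_mul (by norm_num)]
    exact Real.sqrt_le_sqrt (by linarith)
  have hsqrt2 : Real.sqrt 2 ≤ 14/9 := by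
    nlinarith [Real.sq_sqrt (by norm_num : (0:ℝ) ≤ 2), Real.sqrt_nonneg 2]
  have elem1 : 18*sz*(M+1) ≤ 28*(K+M+1)*sm := by
    have h1 : M+1 = sd^2 := (Real.sq_sqrt (by linarith)).symm
    have h2 : K+M+1 = sz^2 := (Real.sq_sqrt (by linarith)).symm
    rw [h1, h2]
    have e1 : sd^2 ≤ sd * (Real.sqrt 2 * sm) := by nlinarith
    have e2 : 18*sz*(sd*(Real.sqrt 2 * sm)) ≤ 18*sz*(sz*(Real.sqrt 2 * sm)) := by
      apply mul_le_mul_of_nonneg_left _ (by positivity)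
      apply mul_le_mul_of_nonneg_right hsdsz (by positivity)
    nlinarith [Real.sqrt_nonneg 2, mul_pos hsz0 hsz0, mul_pos (mul_pos hsz0 hsz0) hsm0]
  -- bound on D^(m+1)
  have hDm : (M+1)^(m+1) ≤ (M+1)*(3*M^m) := by
    rw [pow_succ']
    apply mul_le_mul_of_nonneg_left _ (by positivity)
    calc (M+1)^m ≤ E * M^m := pow_le_exp_mul m m hm le_rfl
      _ ≤ 3 * M^m := by apply mul_le_mul_of_nonneg_right hE3 (by positivity)
  have hQ : K^2 + K*(M+1) + (M+1) ≤ 2*K*(K+M+1) := by nlinarith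
  -- central inequality
  have step2 : (3*ss*(K+M)^(k+m)) * ((M+1)^(m+1)*K^k*(K^2 + K*(M+1) + (M+1))*(K*sk)) ≤
      7*(K^2*(K+M+1)^(k+m+2)) * (4*sk*sm*(K^k*M^m)) := by
    calc (3*ss*(K+M)^(k+m)) * ((M+1)^(m+1)*K^k*(K^2 + K*(M+1) + (M+1))*(K*sk))
        ≤ (3*sz*(K+M+1)^(k+m)) * (((M+1)*(3*M^m))*K^k*(2*K*(K+M+1))*(K*sk)) := by
          have f1 : (3*ss*(K+M)^(k+m)) ≤ (3*sz*(K+M+1)^(k+m)) := by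
            apply mul_le_mul (by linarith) (pow_le_pow_left₀ (by positivity) (by linarith) _)
              (by positivity) (by positivity)
          have f2 : ((M+1)^(m+1)*K^k*(K^2 + K*(M+1) + (M+1))*(K*sk)) ≤
              (((M+1)*(3*M^m))*K^k*(2*K*(K+M+1))*(K*sk)) := by
            apply mul_le_mul_of_nonneg_right _ (by positivity)
            apply mul_le_mul _ hQ (by positivity) (by positivity)
            exact mul_le_mul_of_nonneg_right hDm (by positivity)
          exact mul_le_mul f1 f2 (by positivity) (by positivity)
        _ = (18*sz*(M+1)) * ((K+M+1)^(k+m)*(K+M+1)*M^m*K^k*K^2*sk) := by ring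
        _ ≤ (28*(K+M+1)*sm) * ((K+M+1)^(k+m)*(K+M+1)*M^m*K^k*K^2*sk) := by
          apply mul_le_mul_of_nonneg_right elem1 (by positivity)
        _ = 7*(K^2*(K+M+1)^(k+m+2)) * (4*sk*sm*(K^k*M^m)) := by ring
  -- assemble
  rw [nuNT_eq (m+1) k (by omega) hk]
  push_cast
  rw [show k+(m+1)+1 = k+m+2 from by omega]
  rw [mul_div_assoc']
  rw [div_le_div_iff₀ (by positivity) (by positivity)]
  have hP : (0:ℝ) < 4*sk*sm*(K^k*M^m) := by positivity
  have main : C * ((M+1)^(m+1)*K^k*(K^2 + K*(M+1) + (M+1))) * (K*sk) * (4*sk*sm*(K^k*M^m)) ≤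
      7 * (K^2*(K+M+1)^(k+m+2)) * (4*sk*sm*(K^k*M^m)) := by
    calc C * ((M+1)^(m+1)*K^k*(K^2 + K*(M+1) + (M+1))) * (K*sk) * (4*sk*sm*(K^k*M^m))
        = (C * (4*sk*sm*(K^k*M^m))) * ((M+1)^(m+1)*K^k*(K^2 + K*(M+1) + (M+1))*(K*sk)) := by
          ring
      _ ≤ (3*ss*(K+M)^(k+m)) * ((M+1)^(m+1)*K^k*(K^2 + K*(M+1) + (M+1))*(K*sk)) := by
          apply mul_le_mul_of_nonneg_right step1 (by positivity)
      _ ≤ 7*(K^2*(K+M+1)^(k+m+2)) * (4*sk*sm*(K^k*M^m)) := step2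
  have := le_of_mul_le_mul_right (by convert main using 1 <;> ring) hP
  convert this using 2 <;> push_cast <;> ring

set_option maxHeartbeats 2000000 in
lemma key_lower (k m : ℕ) (hk : 1 ≤ k) (hm : 1 ≤ m) (hkd : k ≤ m+1) :
    1 / (120 * ((k:ℝ) * Real.sqrt k)) ≤ ((k+m).choose k : ℝ) * nuNT (m+1) k := by
  set E : ℝ := Real.exp 1 with hE
  have hE0 : (0:ℝ) < E := Real.exp_pos 1
  have hE3 : E ≤ 3 := by rw [hE]; have := Real.exp_one_lt_d9; linarith
  have hK1 : (1:ℝ) ≤ (k:ℝ) := by exact_mod_cast hk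
  have hM1 : (1:ℝ) ≤ (m:ℝ) := by exact_mod_cast hm
  have hKM : (k:ℝ) ≤ (m:ℝ)+1 := by exact_mod_cast hkd
  have hK0 : (0:ℝ) < k := by linarith
  have hM0 : (0:ℝ) < m := by linarith
  set K : ℝ := (k:ℝ)
  set M : ℝ := (m:ℝ)
  set sk : ℝ := Real.sqrt K with hsk
  set sm : ℝ := Real.sqrt M with hsm
  set ss : ℝ := Real.sqrt (K+M) with hss
  set sz : ℝ := Real.sqrt (K+M+1) with hsz
  set sd : ℝ := Real.sqrt (M+1) with hsd
  have hsk0 : 0 < sk := Real.sqrt_pos.mpr hK0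
  have hsm0 : 0 < sm := Real.sqrt_pos.mpr hM0
  have hss0 : 0 < ss := Real.sqrt_pos.mpr (by linarith)
  have hsz0 : 0 < sz := Real.sqrt_pos.mpr (by linarith)
  have hsd0 : 0 < sd := Real.sqrt_pos.mpr (by linarith)
  set C : ℝ := ((k+m).choose k : ℝ) with hC
  have hC0 : (0:ℝ) ≤ C := by positivity
  -- step 1 : Stirling lower bound on the binomial coefficient
  have step1 : 2*ss*(K+M)^(k+m) ≤ C * (9*sk*sm*(K^k*M^m)) := by
    have u1 : ((Nat.factorial (k+m) : ℕ) : ℝ) ≤ C * (3*sk*(K/E)^k) * (3*sm*(M/E)^m) := by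
      calc ((Nat.factorial (k+m) : ℕ) : ℝ)
          = C * ((Nat.factorial k : ℕ) : ℝ) * ((Nat.factorial m : ℕ) : ℝ) :=
            (cast_choose_fact k m trivial).symm
        _ ≤ C * (3*sk*(K/E)^k) * ((Nat.factorial m : ℕ) : ℝ) := by
            apply mul_le_mul_of_nonneg_right _ (by positivity)
            exact mul_le_mul_of_nonneg_left (stirling_le k hk) hC0
        _ ≤ C * (3*sk*(K/E)^k) * (3*sm*(M/E)^m) := by
            apply mul_le_mul_of_nonneg_left (stirling_le m hm) (by positivity)
    have u2 : 2*ss*((K+M)/E)^(k+m) ≤ ((Nat.factorial (k+m) : ℕ) : ℝ) := by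
      have := stirling_ge (k+m) (by omega)
      push_cast at this
      convert this using 3
    have u3 := u2.trans u1
    have u4 := mul_le_mul_of_nonneg_right u3 (show (0:ℝ) ≤ E^(k+m) by positivity)
    calc 2*ss*(K+M)^(k+m)
        = 2*ss*((K+M)/E)^(k+m) * E^(k+m) := by
          rw [div_pow]; field_simp
      _ ≤ C * (3*sk*(K/E)^k) * (3*sm*(M/E)^m) * E^(k+m) := u4
      _ = C * (9*sk*sm*(K^k*M^m)) := by
          rw [div_pow, div_pow, pow_add]
          field_simp
          ring
  -- auxiliary comparisons
  have hsq2 : Real.sqrt 2 * Real.sqrt 2 = 2 := Real.mul_self_sqrt (by norm_num)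
  have hsmsd : sm ≤ sd := Real.sqrt_le_sqrt (by linarith)
  have hszss : sz ≤ Real.sqrt 2 * ss := by
    rw [hsz, hss, ← Real.sqrt_mul (by norm_num)]
    exact Real.sqrt_le_sqrt (by linarith)
  have hszsd : sz ≤ Real.sqrt 2 * sd := by
    rw [hsz, hsd, ← Real.sqrt_mul (by norm_num)]
    exact Real.sqrt_le_sqrt (by linarith)
  have hZn : (K+M+1)^(k+m) ≤ 3*(K+M)^(k+m) := by
    have h := pow_le_exp_mul (k+m) (k+m) (by omega) le_rfl
    push_cast at h
    have h2 : E * ((K+M))^(k+m) ≤ 3*(K+M)^(k+m) := by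
      apply mul_le_mul_of_nonneg_right hE3 (by positivity)
    calc (K+M+1)^(k+m) = (((k:ℝ)+(m:ℝ))+1)^(k+m) := by rfl
      _ ≤ E * ((k:ℝ)+(m:ℝ))^(k+m) := h
      _ ≤ 3*(K+M)^(k+m) := h2
  have hDmL : (M+1)*M^m ≤ (M+1)^(m+1) := by
    rw [pow_succ']
    apply mul_le_mul_of_nonneg_left _ (by positivity)
    exact pow_le_pow_left₀ (by positivity) (by linarith) m
  have hQL : K*(M+1) ≤ K^2 + K*(M+1) + (M+1) := by nlinarith
  -- the elementary sqrt inequality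
  have elem2 : 27*sm*(K+M+1)^2 ≤ 120*ss*(M+1)^2 := by
    have hz2 : K+M+1 = sz^2 := (Real.sq_sqrt (by linarith)).symm
    have hd2 : M+1 = sd^2 := (Real.sq_sqrt (by linarith)).symm
    rw [hz2, hd2]
    have t0 : sz^3 ≤ (Real.sqrt 2 * sd)^3 := pow_le_pow_left₀ (le_of_lt hsz0) hszsd 3
    have t0' : (Real.sqrt 2 * sd)^3 = 2*Real.sqrt 2*sd^3 := by
      rw [mul_pow]
      have : Real.sqrt 2 ^ 3 = 2 * Real.sqrt 2 := by
        rw [pow_succ, sq, hsq2]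
      rw [this]
    calc 27*sm*(sz^2)^2 = (27*sm*sz)*sz^3 := by ring
      _ ≤ (27*sd*sz)*(2*Real.sqrt 2*sd^3) := by
          apply mul_le_mul _ (t0.trans_eq t0') (by positivity) (by positivity)
          apply mul_le_mul_of_nonneg_right _ (le_of_lt hsz0)
          exact mul_le_mul_of_nonneg_left hsmsd (by norm_num)
      _ = (54*Real.sqrt 2*sz)*sd^4 := by ring
      _ ≤ (54*Real.sqrt 2*(Real.sqrt 2 * ss))*sd^4 := by
          apply mul_le_mul_of_nonneg_right _ (by positivity)
          apply mul_le_mul_of_nonneg_left hszss (by positivity)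
      _ = 54*(Real.sqrt 2*Real.sqrt 2)*ss*sd^4 := by ring
      _ = 108*ss*sd^4 := by rw [hsq2]; ring
      _ ≤ 120*ss*(sd^2)^2 := by nlinarith [mul_nonneg (le_of_lt hss0) (pow_nonneg (le_of_lt hsd0) 4)]
  -- assemble
  rw [nuNT_eq (m+1) k (by omega) hk]
  push_cast
  rw [show k+(m+1)+1 = k+m+2 from by omega]
  rw [mul_div_assoc']
  rw [div_le_div_iff₀ (by positivity) (by positivity)]
  have hP : (0:ℝ) < 9*sk*sm*(K^k*M^m) := by positivity
  have main : 1 * ((K:ℝ)^2*(K+M+1)^(k+m+2)) * (9*sk*sm*(K^k*M^m)) ≤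
      C * ((M+1)^(m+1)*K^k*(K^2 + K*(M+1) + (M+1))) * (120*(K*sk)) * (9*sk*sm*(K^k*M^m)) := by
    have hQpos : (0:ℝ) ≤ K^2 + K*(M+1) + (M+1) := by positivity
    calc 1 * ((K:ℝ)^2*(K+M+1)^(k+m+2)) * (9*sk*sm*(K^k*M^m))
        = (27*sm*(K+M+1)^2) * ((K+M+1)^(k+m) * (K^k*M^m*K^2*sk)) * (1/3) := by ring
      _ ≤ (120*ss*(M+1)^2) * ((K+M+1)^(k+m) * (K^k*M^m*K^2*sk)) * (1/3) := by
          apply mul_le_mul_of_nonneg_right _ (by norm_num)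
          apply mul_le_mul_of_nonneg_right elem2 (by positivity)
      _ ≤ (120*ss*(M+1)^2) * ((3*(K+M)^(k+m)) * (K^k*M^m*K^2*sk)) * (1/3) := by
          apply mul_le_mul_of_nonneg_right _ (by norm_num)
          apply mul_le_mul_of_nonneg_left _ (by positivity)
          apply mul_le_mul_of_nonneg_right hZn (by positivity)
      _ = (2*ss*(K+M)^(k+m)) * ((((M+1)*M^m)*K^k*(K*(M+1)))*(60*K*sk)) := by ring
      _ ≤ (C * (9*sk*sm*(K^k*M^m))) * ((((M+1)*M^m)*K^k*(K*(M+1)))*(60*K*sk)) := by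
          apply mul_le_mul_of_nonneg_right step1 (by positivity)
      _ ≤ (C * (9*sk*sm*(K^k*M^m))) *
            ((((M+1)^(m+1))*K^k*(K^2 + K*(M+1) + (M+1)))*(60*K*sk)) := by
          apply mul_le_mul_of_nonneg_left _ (by positivity)
          apply mul_le_mul_of_nonneg_right _ (by positivity)
          apply mul_le_mul _ hQL (by positivity) (by positivity)
          exact mul_le_mul_of_nonneg_right hDmL (by positivity)
      _ = (C * ((M+1)^(m+1)*K^k*(K^2 + K*(M+1) + (M+1))) * (K*sk) * (9*sk*sm*(K^k*M^m))) * 60 := by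
          ring
      _ ≤ (C * ((M+1)^(m+1)*K^k*(K^2 + K*(M+1) + (M+1))) * (K*sk) * (9*sk*sm*(K^k*M^m))) * 120 := by
          apply mul_le_mul_of_nonneg_left (by norm_num) (by positivity)
      _ = C * ((M+1)^(m+1)*K^k*(K^2 + K*(M+1) + (M+1))) * (120*(K*sk)) * (9*sk*sm*(K^k*M^m)) := by
          ring
  have := le_of_mul_le_mul_right (by convert main using 1 <;> ring) hP
  convert this using 2 <;> push_cast <;> ring


noncomputable def gg (k : ℕ) : ℝ := 1 / ((k:ℝ) * Real.sqrt k)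

lemma gg_eq (k : ℕ) : gg k = (k:ℝ) ^ (-(3/2) : ℝ) := by
  rcases Nat.eq_zero_or_pos k with rfl | hk
  · simp [gg, Real.zero_rpow (by norm_num : (-(3/2):ℝ) ≠ 0)]
  · have hK : (0:ℝ) < k := by exact_mod_cast hk
    rw [gg, Real.rpow_neg hK.le, show (3/2 : ℝ) = 1 + 1/2 by norm_num,
      Real.rpow_add hK, Real.rpow_one, ← Real.sqrt_eq_rpow]
    rw [one_div]
  
lemma gg_nonneg (k : ℕ) : 0 ≤ gg k := by unfold gg; positivity

lemma gg_summable : Summable gg := by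
  simp only [funext gg_eq]
  exact Real.summable_nat_rpow.mpr (by norm_num)

lemma gg_anti {j k : ℕ} (h : j ≤ k) (hj : 1 ≤ j) : gg k ≤ gg j := by
  unfold gg
  have hj0 : (0:ℝ) < j := by exact_mod_cast hj
  have hjk : (j:ℝ) ≤ (k:ℝ) := by exact_mod_cast h
  apply one_div_le_one_div_of_le (by positivity)
  have := Real.sqrt_le_sqrt hjk
  apply mul_le_mul hjk this (Real.sqrt_nonneg _) (by positivity)

lemma gg_step (n : ℕ) (hn : 1 ≤ n) :
    gg (n+1) ≤ 2/Real.sqrt n - 2/Real.sqrt (n+1) := by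
  set a : ℝ := Real.sqrt n with ha
  set b : ℝ := Real.sqrt (n+1) with hb
  have hN : (0:ℝ) < n := by exact_mod_cast hn
  have ha0 : 0 < a := Real.sqrt_pos.mpr hN
  have hb0 : 0 < b := Real.sqrt_pos.mpr (by positivity)
  have ha2 : a^2 = (n:ℝ) := Real.sq_sqrt hN.le
  have hb2 : b^2 = (n:ℝ)+1 := Real.sq_sqrt (by positivity)
  have hab : a ≤ b := Real.sqrt_le_sqrt (by linarith)
  have key : 0 ≤ 2*b^3 - 2*a*b^2 - a := by
    have h2 : (2*b^3 - 2*a*b^2 - a)*(b+a) = 2*b^2*(b^2-a^2) - a*b - a^2 := by ring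
    have h3 : b^2 - a^2 = 1 := by rw [ha2, hb2]; ring
    rw [h3] at h2
    have h4 : 0 ≤ 2*b^2*1 - a*b - a^2 := by nlinarith
    nlinarith [h2, h4, mul_pos ha0 hb0]
  have hcast : ((n+1 : ℕ):ℝ) = (n:ℝ)+1 := by push_cast; ring
  have hgg : gg (n+1) = 1/(b^2*b) := by
    rw [gg, hcast, ← hb2, hb]
    norm_num [hb2]
  rw [hgg]
  have heq : 2/a - 2/b - 1/(b^2*b) = (2*b^3 - 2*a*b^2 - a)/(a*b^3) := by
    field_simp
  have hnn : 0 ≤ (2*b^3 - 2*a*b^2 - a)/(a*b^3) := by positivity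
  rw [← heq] at hnn
  linarith

lemma gg_tail (p : ℕ) (hp : 1 ≤ p) :
    ∑' j : ℕ, gg (j+p+1) ≤ 2/Real.sqrt p := by
  apply Real.tsum_le_of_sum_range_le (fun j => gg_nonneg _)
  intro N
  calc ∑ j ∈ Finset.range N, gg (j+p+1)
      ≤ ∑ j ∈ Finset.range N, (2/Real.sqrt (j+p) - 2/Real.sqrt (j+p+1)) := by
        apply Finset.sum_le_sum
        intro j _
        have := gg_step (j+p) (by omega)
        exact_mod_cast this
    _ = 2/Real.sqrt (0+p) - 2/Real.sqrt (N+p) := by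
        have := Finset.sum_range_sub' (fun j => 2/Real.sqrt ((j:ℝ)+p)) N
        convert this using 2 <;> push_cast <;> ring_nf
    _ ≤ 2/Real.sqrt p := by
        have : 0 ≤ 2/Real.sqrt ((N:ℝ)+p) := by positivity
        simp only [zero_add]
        linarith


lemma nuNT_anti (d p : ℕ) (hd : 1 ≤ d) (hp : 1 ≤ p) : ∀ k, p ≤ k → nuNT d k ≤ nuNT d p := by
  intro k hk
  induction k, hk using Nat.le_induction with
  | base => exact le_rfl
  | succ n hn ih => exact (nuNT_succ_le d n hd (by omega)).trans ih

lemma lamNT_nonneg (d k : ℕ) : 0 ≤ lamNT d k := by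
  unfold lamNT
  split
  · norm_num
  · exact nuNT_nonneg d k

lemma rpow_half_inv (p : ℕ) (hp : 1 ≤ p) : (p:ℝ) ^ (-(1/2) : ℝ) = 1/Real.sqrt p := by
  have hP : (0:ℝ) < p := by exact_mod_cast hp
  rw [Real.rpow_neg hP.le, ← Real.sqrt_eq_rpow, one_div]

set_option maxHeartbeats 2000000 in
/-- Absolute constants C3, C4 > 0 such that for every p that is 1 or positive even, and all
large d: C3·p^(−1/2) ≤ Σ_{k=0}^∞ N(d,k)·min{λ_d(k), ν_d(p)} ≤ C4·p^(−1/2). -/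
theorem tsum_Nsph_min_bounds :
    ∃ C3 C4 : ℝ, 0 < C3 ∧ 0 < C4 ∧
      ∀ p : ℕ, (p = 1 ∨ (Even p ∧ 0 < p)) → ∃ D : ℕ, ∀ d : ℕ, D ≤ d →
        C3 * (p : ℝ) ^ (-(1 / 2 : ℝ)) ≤
            ∑' k : ℕ, (Nsph d k : ℝ) * min (lamNT d k) (nuNT d p) ∧
        ∑' k : ℕ, (Nsph d k : ℝ) * min (lamNT d k) (nuNT d p) ≤
            C4 * (p : ℝ) ^ (-(1 / 2 : ℝ)) := by
  refine ⟨1/340, 56, by norm_num, by norm_num, ?_⟩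
  intro p hp
  have hp1 : 1 ≤ p := by rcases hp with rfl | ⟨_, h⟩ <;> omega
  refine ⟨2*p, ?_⟩
  intro d hd
  obtain ⟨m, rfl⟩ : ∃ m, d = m+1 := ⟨d-1, by omega⟩
  have hm1 : 1 ≤ m := by omega
  have hpm : p ≤ m := by omega
  set f : ℕ → ℝ := fun k => (Nsph (m+1) k : ℝ) * min (lamNT (m+1) k) (nuNT (m+1) p) with hf
  have hP0 : (0:ℝ) < p := by exact_mod_cast hp1
  have hsp0 : 0 < Real.sqrt p := Real.sqrt_pos.mpr hP0
  have hf_nonneg : ∀ k, 0 ≤ f k := by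
    intro k
    apply mul_nonneg (by positivity)
    exact le_min (lamNT_nonneg _ _) (nuNT_nonneg _ _)
  have hlam : ∀ k, 1 ≤ k → lamNT (m+1) k = nuNT (m+1) k := by
    intro k hk
    unfold lamNT
    rw [if_neg (by omega)]
  -- termwise upper bound
  have hfle : ∀ k, 1 ≤ k → f k ≤ 14 * gg k := by
    intro k hk
    obtain ⟨j, rfl⟩ : ∃ j, k = j+1 := ⟨k-1, by omega⟩
    have h1 : f (j+1) ≤ (Nsph (m+1) (j+1) : ℝ) * nuNT (m+1) (j+1) := by
      rw [hf]
      apply mul_le_mul_of_nonneg_left _ (by positivity)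
      rw [← hlam (j+1) (by omega)]
      exact min_le_left _ _
    have h2 : (Nsph (m+1) (j+1) : ℝ) ≤ 2 * ((j+1+m).choose (j+1) : ℝ) := by
      have := Nsph_le' m j
      rw [show j+m+1 = j+1+m by omega] at this
      exact_mod_cast this
    have h3 := key_upper (j+1) m (by omega) hm1
    calc f (j+1) ≤ (Nsph (m+1) (j+1) : ℝ) * nuNT (m+1) (j+1) := h1
      _ ≤ (2 * ((j+1+m).choose (j+1) : ℝ)) * nuNT (m+1) (j+1) := by
          apply mul_le_mul_of_nonneg_right h2 (nuNT_nonneg _ _)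
      _ = 2 * (((j+1+m).choose (j+1) : ℝ) * nuNT (m+1) (j+1)) := by ring
      _ ≤ 2 * (7 / (((j+1:ℕ):ℝ) * Real.sqrt ((j+1:ℕ)))) := by
          apply mul_le_mul_of_nonneg_left h3 (by norm_num)
      _ = 14 * gg (j+1) := by rw [gg]; ring
  have hsum : Summable f := by
    rw [← summable_nat_add_iff 1]
    apply Summable.of_nonneg_of_le (fun j => hf_nonneg _) (fun j => hfle (j+1) (by omega))
    exact (summable_nat_add_iff 1).mpr (gg_summable.mul_left 14)
  constructor
  · -- lower bound
    rw [rpow_half_inv p hp1]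
    have hstep : ∀ k ∈ Finset.Icc (p+1) (2*p), 1/120 * gg (2*p) ≤ f k := by
      intro k hk
      rw [Finset.mem_Icc] at hk
      obtain ⟨j, rfl⟩ : ∃ j, k = j+1 := ⟨k-1, by omega⟩
      have hk1 : 1 ≤ j+1 := by omega
      have hmin : min (lamNT (m+1) (j+1)) (nuNT (m+1) p) = nuNT (m+1) (j+1) := by
        rw [hlam (j+1) hk1]
        exact min_eq_left (nuNT_anti (m+1) p (by omega) hp1 (j+1) (by omega))
      have hcl : ((j+1+m).choose (j+1) : ℝ) ≤ (Nsph (m+1) (j+1) : ℝ) := by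
        have := choose_le_Nsph' m j
        rw [show j+m+1 = j+1+m by omega] at this
        exact_mod_cast this
      have h4 := key_lower (j+1) m hk1 hm1 (by omega)
      calc 1/120 * gg (2*p) ≤ 1/120 * gg (j+1) := by
            apply mul_le_mul_of_nonneg_left (gg_anti (by omega) hk1) (by norm_num)
        _ = 1 / (120 * (((j+1:ℕ):ℝ) * Real.sqrt ((j+1:ℕ)))) := by
            rw [gg]; field_simp
        _ ≤ ((j+1+m).choose (j+1) : ℝ) * nuNT (m+1) (j+1) := h4
        _ ≤ (Nsph (m+1) (j+1) : ℝ) * nuNT (m+1) (j+1) := by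
            apply mul_le_mul_of_nonneg_right hcl (nuNT_nonneg _ _)
        _ = f (j+1) := by simp only [hf]; rw [hmin]
    have hsumIcc : (Finset.Icc (p+1) (2*p)).card • (1/120 * gg (2*p)) ≤
        ∑ k ∈ Finset.Icc (p+1) (2*p), f k :=
      Finset.card_nsmul_le_sum _ _ _ hstep
    have hcard : (Finset.Icc (p+1) (2*p)).card = p := by
      rw [Nat.card_Icc]; omega
    have hle_tsum : ∑ k ∈ Finset.Icc (p+1) (2*p), f k ≤ ∑' k, f k :=
      Summable.sum_le_tsum _ (fun k _ => hf_nonneg k) hsum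
    have hval : 1/340 * (1/Real.sqrt p) ≤ (p:ℝ) * (1/120 * gg (2*p)) := by
      have h2p : ((2*p:ℕ):ℝ) = 2*(p:ℝ) := by push_cast; ring
      have hs2p : Real.sqrt ((2*p:ℕ):ℝ) = Real.sqrt 2 * Real.sqrt p := by
        rw [h2p, Real.sqrt_mul (by norm_num)]
      have hsqrt2 : Real.sqrt 2 ≤ 17/12 := by
        nlinarith [Real.sq_sqrt (by norm_num : (0:ℝ) ≤ 2), Real.sqrt_nonneg 2]
      have hsqrt2pos : 0 < Real.sqrt 2 := by positivity
      rw [gg, hs2p, h2p]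
      rw [show (p:ℝ) * (1/120 * (1 / (2*(p:ℝ) * (Real.sqrt 2 * Real.sqrt p)))) =
        1 / (240 * Real.sqrt 2 * Real.sqrt p) from by field_simp; ring]
      rw [show 1/340 * (1/Real.sqrt p) = 1/(340 * Real.sqrt p) from by rw [one_div_mul_one_div]]
      apply one_div_le_one_div_of_le (by positivity)
      nlinarith [hsp0]
    calc 1/340 * (1/Real.sqrt p) ≤ (p:ℝ) * (1/120 * gg (2*p)) := hval
      _ = (Finset.Icc (p+1) (2*p)).card • (1/120 * gg (2*p)) := by
          rw [hcard, nsmul_eq_mul]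
      _ ≤ ∑ k ∈ Finset.Icc (p+1) (2*p), f k := hsumIcc
      _ ≤ ∑' k, f k := hle_tsum
  · -- upper bound
    rw [rpow_half_inv p hp1]
    rw [← Summable.sum_add_tsum_nat_add (p+1) hsum]
    have head : ∑ k ∈ Finset.range (p+1), f k ≤ 28 * (1/Real.sqrt p) := by
      have hterm : ∀ k ∈ Finset.range (p+1), f k ≤ (Nsph (m+1) k : ℝ) * nuNT (m+1) p := by
        intro k _
        apply mul_le_mul_of_nonneg_left (min_le_right _ _) (by positivity)
      have hsum1 : ∑ k ∈ Finset.range (p+1), f k ≤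
          (((∑ k ∈ Finset.range (p+1), Nsph (m+1) k : ℕ)):ℝ) * nuNT (m+1) p := by
        calc ∑ k ∈ Finset.range (p+1), f k
            ≤ ∑ k ∈ Finset.range (p+1), (Nsph (m+1) k : ℝ) * nuNT (m+1) p :=
              Finset.sum_le_sum hterm
          _ = (((∑ k ∈ Finset.range (p+1), Nsph (m+1) k : ℕ)):ℝ) * nuNT (m+1) p := by
              rw [← Finset.sum_mul]
              push_cast
              ring
      have hchain : (((∑ k ∈ Finset.range (p+1), Nsph (m+1) k : ℕ)):ℝ) * nuNT (m+1) p ≤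
          4 * (((p+m).choose p : ℝ) * nuNT (m+1) p) := by
        have c1 : ((∑ k ∈ Finset.range (p+1), Nsph (m+1) k : ℕ):ℝ) ≤
            4 * ((p+m).choose p : ℝ) := by
          have s1 := sum_Nsph_le' m p
          have s2 := choose_pd' m p hp1 hpm
          have : (∑ k ∈ Finset.range (p+1), Nsph (m+1) k : ℕ) ≤ 4 * (p+m).choose p := by omega
          exact_mod_cast this
        calc (((∑ k ∈ Finset.range (p+1), Nsph (m+1) k : ℕ)):ℝ) * nuNT (m+1) p
            ≤ (4 * ((p+m).choose p : ℝ)) * nuNT (m+1) p := by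
              apply mul_le_mul_of_nonneg_right c1 (nuNT_nonneg _ _)
          _ = 4 * (((p+m).choose p : ℝ) * nuNT (m+1) p) := by ring
      have hku := key_upper p m hp1 hm1
      have hggp : 7 / ((p:ℝ) * Real.sqrt p) ≤ 7 * (1/Real.sqrt p) := by
        rw [show (7:ℝ) * (1/Real.sqrt p) = 7 / Real.sqrt p from by ring]
        apply div_le_div_of_nonneg_left (by norm_num) hsp0
        nlinarith [mul_le_mul_of_nonneg_right (show (1:ℝ) ≤ (p:ℝ) from by exact_mod_cast hp1) hsp0.le]
      calc ∑ k ∈ Finset.range (p+1), f k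
          ≤ (((∑ k ∈ Finset.range (p+1), Nsph (m+1) k : ℕ)):ℝ) * nuNT (m+1) p := hsum1
        _ ≤ 4 * (((p+m).choose p : ℝ) * nuNT (m+1) p) := hchain
        _ ≤ 4 * (7 / ((p:ℝ) * Real.sqrt p)) := by
            apply mul_le_mul_of_nonneg_left hku (by norm_num)
        _ ≤ 4 * (7 * (1/Real.sqrt p)) := by
            apply mul_le_mul_of_nonneg_left hggp (by norm_num)
        _ = 28 * (1/Real.sqrt p) := by ring
    have tail : ∑' j : ℕ, f (j + (p+1)) ≤ 28 * (1/Real.sqrt p) := by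
      have hb : ∀ j : ℕ, f (j + (p+1)) ≤ 14 * gg (j+p+1) := by
        intro j
        have := hfle (j+p+1) (by omega)
        rw [show j+(p+1) = j+p+1 from by omega]
        exact this
      calc ∑' j : ℕ, f (j + (p+1))
          ≤ ∑' j : ℕ, 14 * gg (j+p+1) := by
            apply Summable.tsum_le_tsum hb
            · exact (summable_nat_add_iff (p+1)).mpr hsum
            · exact (summable_nat_add_iff (p+1)).mpr (gg_summable.mul_left 14) |>.congr
                (fun j => by rw [show j+(p+1) = j+p+1 from by omega])
        _ = 14 * ∑' j : ℕ, gg (j+p+1) := tsum_mul_left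
        _ ≤ 14 * (2/Real.sqrt p) := by
            apply mul_le_mul_of_nonneg_left (gg_tail p hp1) (by norm_num)
        _ = 28 * (1/Real.sqrt p) := by ring
    calc ∑ k ∈ Finset.range (p+1), f k + ∑' j : ℕ, f (j + (p+1))
        ≤ 28 * (1/Real.sqrt p) + 28 * (1/Real.sqrt p) := add_le_add head tail
      _ = 56 * (1/Real.sqrt p) := by ring
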